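/- Let q > 2, λ > 0, and let f : [0,∞) → ℝ be a twice continuously differentiable solution of the ODE f''(ξ) + λ|f'(ξ)|^q − (1/2)ξ f'(ξ) + ((q−2)/(2(q−1))) f(ξ) = 0 on [0,∞) with f(0) = −1 and f'(0) = 0. Then lim_{ξ→∞} f'(ξ)/ξ^{1/(q−1)} = (1/(λq))^{1/(q−1)}. -/

import Mathlib

open Set Filter Topology Real

/-- `f` is a twice continuously differentiable solution, on the set `s`, of the
self-similar profile ODE `f'' + λ|f'|^q - (1/2)ξ f' + ((q-2)/(2(q-1))) f = 0`
associated with the generalized deterministic KPZ equation. -/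
def SolvesKPZProfile (q lam : ℝ) (s : Set ℝ) (f : ℝ → ℝ) : Prop :=
  ContDiffOn ℝ 2 f s ∧
  ∀ ξ ∈ s,
    derivWithin (derivWithin f s) s ξ + lam * |derivWithin f s ξ| ^ q
      - (1 / 2) * ξ * derivWithin f s ξ + ((q - 2) / (2 * (q - 1))) * f ξ = 0



lemma KPZaux.monoIci {φ φ' : ℝ → ℝ} {A : ℝ} (hc : ContinuousOn φ (Ici A))
    (hd : ∀ x, A < x → HasDerivAt φ (φ' x) x) (h0 : ∀ x, A < x → 0 ≤ φ' x) :
    MonotoneOn φ (Ici A) := by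
  refine monotoneOn_of_hasDerivWithinAt_nonneg (f' := φ') (convex_Ici A) hc ?_ ?_ <;>
    rw [interior_Ici]
  · exact fun x hx => ((hd x hx).hasDerivWithinAt)
  · exact fun x hx => h0 x hx

lemma KPZaux.antiIci {φ φ' : ℝ → ℝ} {A : ℝ} (hc : ContinuousOn φ (Ici A))
    (hd : ∀ x, A < x → HasDerivAt φ (φ' x) x) (h0 : ∀ x, A < x → φ' x ≤ 0) :
    AntitoneOn φ (Ici A) := by
  refine antitoneOn_of_hasDerivWithinAt_nonpos (f' := φ') (convex_Ici A) hc ?_ ?_ <;>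
    rw [interior_Ici]
  · exact fun x hx => ((hd x hx).hasDerivWithinAt)
  · exact fun x hx => h0 x hx

lemma KPZaux.monoIcc {φ φ' : ℝ → ℝ} {A B : ℝ} (hc : ContinuousOn φ (Icc A B))
    (hd : ∀ x, A < x → x < B → HasDerivAt φ (φ' x) x) (h0 : ∀ x, A < x → x < B → 0 ≤ φ' x) :
    MonotoneOn φ (Icc A B) := by
  refine monotoneOn_of_hasDerivWithinAt_nonneg (f' := φ') (convex_Icc A B) hc ?_ ?_ <;>
    rw [interior_Icc]
  · exact fun x hx => ((hd x hx.1 hx.2).hasDerivWithinAt)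
  · exact fun x hx => h0 x hx.1 hx.2

lemma KPZaux.strictMonoIcc {φ φ' : ℝ → ℝ} {A B : ℝ} (hc : ContinuousOn φ (Icc A B))
    (hd : ∀ x, A < x → x < B → HasDerivAt φ (φ' x) x) (h0 : ∀ x, A < x → x < B → 0 < φ' x) :
    StrictMonoOn φ (Icc A B) := by
  refine strictMonoOn_of_hasDerivWithinAt_pos (f' := φ') (convex_Icc A B) hc ?_ ?_ <;>
    rw [interior_Icc]
  · exact fun x hx => ((hd x hx.1 hx.2).hasDerivWithinAt)
  · exact fun x hx => h0 x hx.1 hx.2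

/-- Invariance: if `ψ' < 0` wherever `ψ ≥ 0`, and `ψ A ≤ 0`, then `ψ ≤ 0` on `[A,∞)`. -/
lemma KPZaux.inv_stay {ψ ψ' : ℝ → ℝ} {A : ℝ}
    (hd : ∀ x, A ≤ x → HasDerivAt ψ (ψ' x) x)
    (hneg : ∀ x, A ≤ x → 0 ≤ ψ x → ψ' x < 0) (h0 : ψ A ≤ 0) :
    ∀ x, A ≤ x → ψ x ≤ 0 := by
  intro x₁ hx₁
  by_contra hpos
  push_neg at hpos
  have hcont : ContinuousOn ψ (Ici A) := fun x hx => (hd x hx).continuousAt.continuousWithinAt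
  have hAx : A < x₁ := by
    rcases lt_or_eq_of_le hx₁ with h | h
    · exact h
    · exact absurd (h ▸ h0) (not_le.2 hpos)
  set S : Set ℝ := Icc A x₁ ∩ ψ ⁻¹' (Iic 0) with hSdef
  have hScl : IsClosed S :=
    (hcont.mono (Icc_subset_Ici_self)).preimage_isClosed_of_isClosed isClosed_Icc isClosed_Iic
  have hScpt : IsCompact S := isCompact_Icc.of_isClosed_subset hScl inter_subset_left
  have hSne : S.Nonempty := ⟨A, ⟨le_refl _, le_of_lt hAx⟩, h0⟩
  set ξ := sSup S with hξdef
  have hξS : ξ ∈ S := hScpt.sSup_mem hSne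
  obtain ⟨⟨hξA, hξx₁⟩, hψξ⟩ := hξS
  have hξlt : ξ < x₁ := by
    rcases lt_or_eq_of_le hξx₁ with h | h
    · exact h
    · exact absurd (h ▸ hψξ) (not_le.2 hpos)
  have hposr : ∀ x ∈ Ioc ξ x₁, 0 < ψ x := by
    intro x hx
    by_contra hle
    push_neg at hle
    have : x ∈ S := ⟨⟨le_trans hξA (le_of_lt hx.1), hx.2⟩, hle⟩
    exact absurd (le_csSup hScpt.bddAbove this) (not_le.2 hx.1)
  have hψξ0 : ψ ξ = 0 := by
    refine le_antisymm hψξ ?_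
    have htd : Tendsto ψ (𝓝[>] ξ) (𝓝 (ψ ξ)) :=
      ((hd ξ hξA).continuousAt.continuousWithinAt : ContinuousWithinAt ψ (Ioi ξ) ξ)
    refine ge_of_tendsto htd ?_
    filter_upwards [Ioc_mem_nhdsGT_of_mem (⟨le_refl _, hξlt⟩ : ξ ∈ Ico ξ x₁)] with x hx
    exact le_of_lt (hposr x hx)
  have hd'neg : ψ' ξ < 0 := hneg ξ hξA (le_of_eq hψξ0.symm)
  have hslope : Tendsto (slope ψ ξ) (𝓝[>] ξ) (𝓝 (ψ' ξ)) :=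
    (hasDerivAt_iff_tendsto_slope.1 (hd ξ hξA)).mono_left
      (nhdsWithin_mono _ (fun y hy => ne_of_gt hy))
  have hev : ∀ᶠ x in 𝓝[>] ξ, slope ψ ξ x < 0 := hslope.eventually_lt_const hd'neg
  have hev2 : ∀ᶠ x in 𝓝[>] ξ, 0 < slope ψ ξ x := by
    filter_upwards [Ioc_mem_nhdsGT_of_mem (⟨le_refl _, hξlt⟩ : ξ ∈ Ico ξ x₁),
      self_mem_nhdsWithin] with x hx hx'
    rw [slope_def_field, hψξ0, sub_zero]
    exact div_pos (hposr x hx) (sub_pos.2 hx')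
  obtain ⟨x, hx1, hx2⟩ := (hev.and hev2).exists
  exact absurd hx1 (not_lt.2 (le_of_lt hx2))

/-- Entry + invariance: if `ψ' ≤ -ρ < 0` wherever `ψ ≥ 0`, then eventually `ψ ≤ 0`. -/
lemma KPZaux.inv_enter {ψ ψ' : ℝ → ℝ} {A ρ : ℝ} (hρ : 0 < ρ)
    (hd : ∀ x, A ≤ x → HasDerivAt ψ (ψ' x) x)
    (hneg : ∀ x, A ≤ x → 0 ≤ ψ x → ψ' x ≤ -ρ) :
    ∀ᶠ x in atTop, ψ x ≤ 0 := by
  have hstay : ∀ B, A ≤ B → ψ B ≤ 0 → ∀ x, B ≤ x → ψ x ≤ 0 := by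
    intro B hB hψB
    exact KPZaux.inv_stay (fun x hx => hd x (le_trans hB hx))
      (fun x hx h0 => lt_of_le_of_lt (hneg x (le_trans hB hx) h0) (by linarith)) hψB
  by_cases h : ∃ B, A ≤ B ∧ ψ B ≤ 0
  · obtain ⟨B, hB, hψB⟩ := h
    rw [eventually_atTop]
    exact ⟨B, hstay B hB hψB⟩
  · push_neg at h
    exfalso
    have hpos : ∀ x, A ≤ x → 0 < ψ x := fun x hx => h x hx
    have hanti : AntitoneOn (fun x => ψ x + ρ * x) (Ici A) := by
      refine KPZaux.antiIci (fun x hx => ((hd x hx).continuousAt.add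
        (by continuity : Continuous fun x : ℝ => ρ * x).continuousAt).continuousWithinAt)
        (fun x hx => ((hd x (le_of_lt hx)).add
          ((hasDerivAt_id x).const_mul ρ)) ) ?_
      intro x hx
      have := hneg x (le_of_lt hx) (le_of_lt (hpos x (le_of_lt hx)))
      linarith
    set T := max A ((ψ A + ρ * A) / ρ + 1) with hT
    have hTA : A ≤ T := le_max_left _ _
    have h1 : ψ T + ρ * T ≤ ψ A + ρ * A := hanti (le_refl A : A ∈ Ici A) hTA hTA
    have h2 : (ψ A + ρ * A) / ρ + 1 ≤ T := le_max_right _ _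
    have h3 : ψ A + ρ * A ≤ ρ * T - ρ := by
      have := (div_le_iff₀ hρ).1 (by linarith : (ψ A + ρ * A) / ρ ≤ T - 1)
      linarith [this]
    have := hpos T hTA
    linarith




namespace KPZaux

structure Setting (q lam : ℝ) (f g : ℝ → ℝ) : Prop where
  hq : 2 < q
  hlam : 0 < lam
  hfc : ContinuousOn f (Ici 0)
  hgc : ContinuousOn g (Ici 0)
  hf' : ∀ x : ℝ, 0 < x → HasDerivAt f (g x) x
  hg' : ∀ x : ℝ, 0 < x →
    HasDerivAt g (x/2 * g x - lam * |g x| ^ q - (q-2)/(2*(q-1)) * f x) x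
  hf0 : f 0 = -1
  hg0 : g 0 = 0

noncomputable def G (q lam : ℝ) (f g : ℝ → ℝ) : ℝ → ℝ :=
  fun x => x/2 * g x - lam * |g x| ^ q - (q-2)/(2*(q-1)) * f x

noncomputable def u (q lam : ℝ) (g : ℝ → ℝ) : ℝ → ℝ := fun x => lam * g x ^ (q-1)

variable {q lam : ℝ} {f g : ℝ → ℝ}

lemma Setting.hq1 (S : Setting q lam f g) : (1:ℝ) < q - 1 := by have := S.hq; linarith

lemma Setting.hcpos (S : Setting q lam f g) : 0 < (q-2)/(2*(q-1)) := by
  have := S.hq; apply div_pos <;> linarith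

lemma Setting.hclt (S : Setting q lam f g) : (q-2)/(2*(q-1)) < 1/2 := by
  have h := S.hq
  rw [div_lt_iff₀ (by linarith : (0:ℝ) < 2*(q-1))]
  linarith

lemma Setting.hbpos (S : Setting q lam f g) : 0 < 1/(2*(q-1)) := by
  have := S.hq; apply div_pos <;> linarith

lemma Setting.hbc (S : Setting q lam f g) : 1/(2*(q-1)) = 1/2 - (q-2)/(2*(q-1)) := by
  have h : q - 1 ≠ 0 := by have := S.hq; linarith
  field_simp
  ring

lemma Setting.Gcont (S : Setting q lam f g) : ContinuousOn (G q lam f g) (Ici 0) := by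
  have habs : ContinuousOn (fun x => |g x| ^ q) (Ici 0) := by
    apply ContinuousOn.comp (t := univ)
      (fun y (_ : y ∈ univ) => (Real.continuousAt_rpow_const y q
        (Or.inr (by linarith [S.hq]))).continuousWithinAt) (S.hgc.abs) (fun x _ => trivial)
  exact (((continuousOn_id.div_const 2).mul S.hgc).sub (habs.const_smul lam)).sub
    (S.hfc.const_smul ((q-2)/(2*(q-1))))

lemma Setting.G0 (S : Setting q lam f g) : G q lam f g 0 = (q-2)/(2*(q-1)) := by
  have hq0 : q ≠ 0 := by have := S.hq; linarith
  simp [G, S.hg0, S.hf0, Real.zero_rpow hq0]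

lemma Setting.gcontAt (S : Setting q lam f g) {x : ℝ} (hx : 0 < x) : ContinuousAt g x :=
  S.hgc.continuousAt (Ici_mem_nhds hx)

/-- derivative of `G` at interior points where `g > 0`. -/
lemma Setting.hG' (S : Setting q lam f g) {x : ℝ} (hx : 0 < x) (hgx : 0 < g x) :
    HasDerivAt (G q lam f g)
      (1/(2*(q-1)) * g x + (x/2 - q * u q lam g x) * G q lam f g x) x := by
  have hgd : HasDerivAt g (G q lam f g x) x := S.hg' x hx
  have hev : ∀ᶠ y in 𝓝 x, 0 < g y :=
    (S.gcontAt hx).eventually (eventually_gt_nhds hgx)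
  have h1 : HasDerivAt (fun y => g y ^ q) (q * g x ^ (q-1) * G q lam f g x) x := by
    have := (Real.hasDerivAt_rpow_const (x := g x) (p := q)
      (Or.inl (ne_of_gt hgx))).comp x hgd
    exact this.congr_deriv (by ring)
  have h2 : HasDerivAt (fun y => |g y| ^ q) (q * g x ^ (q-1) * G q lam f g x) x := by
    apply h1.congr_of_eventuallyEq
    filter_upwards [hev] with y hy
    rw [abs_of_pos hy]
  have hA : HasDerivAt (fun y : ℝ => y/2 * g y) (1/2 * g x + x/2 * G q lam f g x) x := by
    exact ((hasDerivAt_id x).div_const 2).mul hgd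
  have hc := (S.hf' x hx).const_mul ((q-2)/(2*(q-1)))
  have := (hA.sub (h2.const_mul lam)).sub hc
  have heq : (fun y => y/2 * g y - lam * |g y| ^ q - (q-2)/(2*(q-1)) * f y) = G q lam f g := rfl
  replace this : HasDerivAt (G q lam f g) _ x := this
  convert this using 1
  simp only [u]
  rw [S.hbc]
  ring


lemma Setting.Gpos (S : Setting q lam f g) : ∀ x, 0 ≤ x → 0 < G q lam f g x := by
  by_contra hcon
  push_neg at hcon
  obtain ⟨x₁, hx₁0, hx₁⟩ := hcon
  set GG := G q lam f g with hGG
  set T : Set ℝ := Icc 0 x₁ ∩ GG ⁻¹' (Iic 0) with hT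
  have hGcont := S.Gcont
  have hTcl : IsClosed T :=
    (hGcont.mono Icc_subset_Ici_self).preimage_isClosed_of_isClosed isClosed_Icc isClosed_Iic
  have hTcpt : IsCompact T := isCompact_Icc.of_isClosed_subset hTcl inter_subset_left
  have hTne : T.Nonempty := ⟨x₁, ⟨hx₁0, le_refl _⟩, hx₁⟩
  set ξ := sInf T with hξ
  have hξT : ξ ∈ T := hTcl.csInf_mem hTne hTcpt.bddBelow
  obtain ⟨⟨hξ0, hξx₁⟩, hGξ⟩ := hξT
  simp only [mem_preimage, mem_Iic] at hGξ
  have hGpos_lt : ∀ y, 0 ≤ y → y < ξ → 0 < GG y := by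
    intro y hy0 hyξ
    by_contra hle
    push_neg at hle
    have : y ∈ T := ⟨⟨hy0, le_trans (le_of_lt hyξ) hξx₁⟩, hle⟩
    exact absurd (csInf_le hTcpt.bddBelow this) (not_le.2 hyξ)
  have hG00 : GG 0 = (q-2)/(2*(q-1)) := S.G0
  have hξpos : 0 < ξ := by
    rcases lt_or_eq_of_le hξ0 with h | h
    · exact h
    · exfalso
      rw [← h] at hGξ
      have := S.hcpos
      rw [hG00] at hGξ
      linarith
  have hmono : StrictMonoOn g (Icc 0 ξ) := by
    apply strictMonoIcc (φ' := GG) (S.hgc.mono (Icc_subset_Ici_self))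
    · intro x hx0 _
      exact S.hg' x hx0
    · intro x hx0 hxξ
      exact hGpos_lt x (le_of_lt hx0) hxξ
  have hgξ : 0 < g ξ := by
    have := hmono (left_mem_Icc.2 (le_of_lt hξpos)) (right_mem_Icc.2 (le_of_lt hξpos)) hξpos
    rwa [S.hg0] at this
  have hmem : Ioi (0:ℝ) ∈ 𝓝[<] ξ := mem_nhdsWithin_of_mem_nhds (Ioi_mem_nhds hξpos)
  have hGξge : 0 ≤ GG ξ := by
    have heq : 𝓝[<] ξ = 𝓝[Iio ξ ∩ Ioi 0] ξ := nhdsWithin_restrict' _ (Ioi_mem_nhds hξpos)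
    have htd : Tendsto GG (𝓝[<] ξ) (𝓝 (GG ξ)) := by
      rw [heq]
      exact (hGcont ξ (le_of_lt hξpos)).tendsto.mono_left
        (nhdsWithin_mono _ (fun y hy => mem_Ici.2 (le_of_lt (mem_Ioi.1 hy.2))))
    refine ge_of_tendsto htd ?_
    filter_upwards [self_mem_nhdsWithin, hmem] with y hy hy'
    exact le_of_lt (hGpos_lt y (le_of_lt hy') hy)
  have hGξ0 : GG ξ = 0 := le_antisymm hGξ hGξge
  have hd : HasDerivAt GG (1/(2*(q-1)) * g ξ) ξ := by
    have := S.hG' hξpos hgξ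
    rwa [← hGG, hGξ0, mul_zero, add_zero] at this
  have hDpos : 0 < 1/(2*(q-1)) * g ξ := mul_pos S.hbpos hgξ
  have hslope : Tendsto (slope GG ξ) (𝓝[<] ξ) (𝓝 (1/(2*(q-1)) * g ξ)) :=
    (hasDerivAt_iff_tendsto_slope.1 hd).mono_left
      (nhdsWithin_mono _ (fun y hy => ne_of_lt hy))
  have hev : ∀ᶠ y in 𝓝[<] ξ, 0 < slope GG ξ y := hslope.eventually_const_lt hDpos
  have hev2 : ∀ᶠ y in 𝓝[<] ξ, slope GG ξ y < 0 := by
    filter_upwards [self_mem_nhdsWithin, hmem] with y hy hy'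
    rw [slope_def_field, hGξ0, sub_zero]
    exact div_neg_of_pos_of_neg (hGpos_lt y (le_of_lt hy') hy) (sub_neg.2 (mem_Iio.1 hy))
  obtain ⟨y, h1, h2⟩ := (hev.and hev2).exists
  linarith

lemma Setting.gmono (S : Setting q lam f g) : StrictMonoOn g (Ici 0) := by
  refine strictMonoOn_of_hasDerivWithinAt_pos (f' := G q lam f g) (convex_Ici 0) S.hgc ?_ ?_ <;>
    rw [interior_Ici]
  · exact fun x hx => (S.hg' x hx).hasDerivWithinAt
  · exact fun x hx => S.Gpos x (le_of_lt hx)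

lemma Setting.gpos (S : Setting q lam f g) {x : ℝ} (hx : 0 < x) : 0 < g x := by
  have := S.gmono (self_mem_Ici) (mem_Ici.2 (le_of_lt hx)) hx
  rwa [S.hg0] at this

lemma Setting.gnonneg (S : Setting q lam f g) {x : ℝ} (hx : 0 ≤ x) : 0 ≤ g x := by
  rcases lt_or_eq_of_le hx with h | h
  · exact le_of_lt (S.gpos h)
  · rw [← h, S.hg0]

lemma Setting.fmono (S : Setting q lam f g) : MonotoneOn f (Ici 0) :=
  monoIci S.hfc S.hf' (fun x hx => S.gnonneg (le_of_lt hx))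

lemma Setting.fge (S : Setting q lam f g) {x : ℝ} (hx : 0 ≤ x) : -1 ≤ f x := by
  have := S.fmono self_mem_Ici (mem_Ici.2 hx) hx
  rwa [S.hf0] at this

lemma Setting.fle (S : Setting q lam f g) {x : ℝ} (hx : 0 ≤ x) : f x ≤ x * g x - 1 := by
  rcases lt_or_eq_of_le hx with h | h
  · have hmono : MonotoneOn (fun y => g x * y - f y) (Icc 0 x) := by
      refine monoIcc (φ' := fun y => g x - g y) ?_ ?_ ?_
      · exact ((continuous_const.mul continuous_id).continuousOn).sub
          (S.hfc.mono (Icc_subset_Ici_self))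
      · intro y hy0 _
        exact (((hasDerivAt_id y).const_mul (g x)).sub (S.hf' y hy0)).congr_deriv (by simp)
      · intro y hy0 hyx
        have := S.gmono.monotoneOn (mem_Ici.2 (le_of_lt hy0)) (mem_Ici.2 hx) (le_of_lt hyx)
        show (0:ℝ) ≤ g x - g y
        linarith
    have h2 := hmono (left_mem_Icc.2 hx) (right_mem_Icc.2 hx) hx
    simp only [mul_zero, zero_sub, S.hf0] at h2
    linarith [h2]
  · rw [← h, S.hf0, S.hg0]
    norm_num

lemma Setting.upos (S : Setting q lam f g) {x : ℝ} (hx : 0 < x) : 0 < u q lam g x :=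
  mul_pos S.hlam (Real.rpow_pos_of_pos (S.gpos hx) _)

lemma Setting.hu' (S : Setting q lam f g) {x : ℝ} (hx : 0 < x) :
    HasDerivAt (u q lam g) (lam*(q-1)*(g x)^(q-2) * G q lam f g x) x := by
  have hgx := S.gpos hx
  have h1 : HasDerivAt (fun y => g y ^ (q-1)) ((q-1) * g x ^ (q-1-1) * G q lam f g x) x :=
    (Real.hasDerivAt_rpow_const (x := g x) (p := q-1) (Or.inl (ne_of_gt hgx))).comp x
      (S.hg' x hx)
  have h2 := h1.const_mul lam
  have : q - 1 - 1 = q - 2 := by ring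
  rw [this] at h2
  exact h2.congr_deriv (by ring)

lemma Setting.ustar (S : Setting q lam f g) {x : ℝ} (hx : 0 < x) :
    (q-1) * u q lam g x * (1/(2*(q-1)) * x - u q lam g x)
      ≤ lam*(q-1)*(g x)^(q-2) * G q lam f g x := by
  have hgx := S.gpos hx
  have hgq : (g x)^(q-1) * g x = (g x)^q := by
    have h := Real.rpow_add_one (ne_of_gt hgx) (q-1)
    rw [show q - 1 + 1 = q by ring] at h
    exact h.symm
  have hgq2 : (g x)^(q-2) * g x = (g x)^(q-1) := by
    have h := Real.rpow_add_one (ne_of_gt hgx) (q-2)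
    rw [show q - 2 + 1 = q - 1 by ring] at h
    exact h.symm
  have h1 : g x * (1/(2*(q-1)) * x - u q lam g x) ≤ G q lam f g x := by
    have habs : |g x| = g x := abs_of_pos hgx
    have key : (q-2)/(2*(q-1)) * f x ≤ (q-2)/(2*(q-1)) * (x * g x - 1) :=
      mul_le_mul_of_nonneg_left (S.fle (le_of_lt hx)) (le_of_lt S.hcpos)
    rw [show (q-2)/(2*(q-1)) * (x * g x - 1) = (q-2)/(2*(q-1)) * (x * g x) - (q-2)/(2*(q-1)) from by ring] at key
    have hbc := S.hbc
    simp only [G, u, habs]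
    rw [hbc]
    have e1 : g x * ((1/2 - (q-2)/(2*(q-1))) * x - lam * g x ^ (q-1))
        = x/2 * g x - (q-2)/(2*(q-1)) * (x * g x) - lam * (g x ^ (q-1) * g x) := by ring
    rw [e1, hgq]
    linarith [key, S.hcpos]
  have hcpos : (0:ℝ) ≤ lam*(q-1)*(g x)^(q-2) :=
    le_of_lt (mul_pos (mul_pos S.hlam (by linarith [S.hq] : (0:ℝ) < q - 1))
      (Real.rpow_pos_of_pos hgx _))
  have h2 := mul_le_mul_of_nonneg_left h1 hcpos
  have e : (q-1) * u q lam g x * (1/(2*(q-1)) * x - u q lam g x)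
      = lam*(q-1)*(g x)^(q-2) * (g x * (1/(2*(q-1)) * x - u q lam g x)) := by
    simp only [u]
    rw [← hgq2]
    ring
  rw [e]
  exact h2

lemma Setting.hu'' (S : Setting q lam f g) {x : ℝ} (hx : 0 < x) :
    HasDerivAt (u q lam g) (lam*(q-1)*(g x)^(q-2) * G q lam f g x) x := S.hu' hx

lemma Setting.ulow (S : Setting q lam f g) {δ : ℝ} (hδ : 0 < δ) (hδb : δ ≤ 1/(2*(q-1))) :
    ∀ᶠ x in atTop, (1/(2*(q-1)) - δ) * x ≤ u q lam g x := by
  set b := 1/(2*(q-1)) with hb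
  have hbpos : 0 < b := S.hbpos
  have hq1 : (0:ℝ) < q - 1 := by linarith [S.hq]
  set μ := min (u q lam g 1) b / 2 with hμ
  have hμpos : 0 < μ := by
    have := S.upos one_pos
    have : 0 < min (u q lam g 1) b := lt_min this hbpos
    positivity
  have hμu1 : μ ≤ u q lam g 1 := by
    have : min (u q lam g 1) b ≤ u q lam g 1 := min_le_left _ _
    linarith
  have hμb : μ ≤ b / 2 := by
    have : min (u q lam g 1) b ≤ b := min_le_right _ _
    linarith
  -- claim 1 : u ≥ μ on [1, ∞)
  have claim1 : ∀ x, 1 ≤ x → μ ≤ u q lam g x := by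
    have hstay := inv_stay (ψ := fun y => μ - u q lam g y)
      (ψ' := fun y => -(lam*(q-1)*(g y)^(q-2) * G q lam f g y)) (A := 1)
      (fun y hy => (S.hu' (by linarith : (0:ℝ) < y)).const_sub μ)
      (by
        intro y hy hpos
        show -(lam*(q-1)*(g y)^(q-2) * G q lam f g y) < 0
        have hpos' : u q lam g y ≤ μ := by
          have : (0:ℝ) ≤ μ - u q lam g y := hpos
          linarith
        have hy0 : (0:ℝ) < y := by linarith
        have h1 : (q-1) * u q lam g y * (b*y - u q lam g y)
            ≤ lam*(q-1)*(g y)^(q-2) * G q lam f g y := S.ustar hy0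
        have h2 : u q lam g y ≤ b/2 := le_trans hpos' hμb
        have h3 : b*y - u q lam g y ≥ b/2 := by
          have : b * 1 ≤ b * y := by nlinarith
          linarith
        have h4 : 0 < (q-1) * u q lam g y * (b*y - u q lam g y) := by
          have := S.upos hy0
          apply mul_pos (mul_pos hq1 this)
          linarith
        linarith)
      (by
        show μ - u q lam g 1 ≤ 0
        linarith)
    intro x hx
    have h := hstay x hx
    have h' : μ - u q lam g x ≤ 0 := h
    linarith
  -- claim 2 : barrier
  set A := max 1 ((b + 1)/((q-1)*μ*δ)) with hA
  have hA1 : (1:ℝ) ≤ A := le_max_left _ _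
  have key : ∀ᶠ x in atTop, (b - δ) * x - u q lam g x ≤ 0 := by
    refine inv_enter (ρ := 1) one_pos
      (ψ' := fun y => (b - δ) - lam*(q-1)*(g y)^(q-2) * G q lam f g y) (A := A)
      (fun y hy => by
        exact ((((hasDerivAt_id y).const_mul (b - δ)).sub
          (S.hu' (by linarith : (0:ℝ) < y)))).congr_deriv (by simp)) ?_
    intro y hy hpos
    have hy1 : (1:ℝ) ≤ y := le_trans hA1 hy
    have hy0 : (0:ℝ) < y := by linarith
    have hpos' : (0:ℝ) ≤ (b - δ) * y - u q lam g y := hpos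
    have hu_y : u q lam g y ≤ (b - δ) * y := by linarith
    have hμy := claim1 y hy1
    have h1 : (q-1) * u q lam g y * (b*y - u q lam g y)
        ≤ lam*(q-1)*(g y)^(q-2) * G q lam f g y := S.ustar hy0
    have h3 : δ * y ≤ b*y - u q lam g y := by nlinarith
    have h4 : (q-1) * μ * (δ * y) ≤ (q-1) * u q lam g y * (b*y - u q lam g y) := by
      apply mul_le_mul
      · exact mul_le_mul_of_nonneg_left hμy (le_of_lt hq1)
      · exact h3
      · exact le_of_lt (mul_pos hδ hy0)
      · exact le_of_lt (mul_pos hq1 (S.upos hy0))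
    have h5 : (b + 1)/((q-1)*μ*δ) ≤ y := le_trans (le_max_right _ _) hy
    have h6 : b + 1 ≤ (q-1)*μ*δ*y := by
      rw [div_le_iff₀ (by positivity)] at h5
      linarith
    have h7 : b + 1 ≤ (q-1) * u q lam g y * (b*y - u q lam g y) := by nlinarith
    show (b - δ) - lam*(q-1)*(g y)^(q-2) * G q lam f g y ≤ -1
    linarith
  filter_upwards [key] with x hx
  linarith

lemma Setting.gtop (S : Setting q lam f g) : Tendsto g atTop atTop := by
  have hq1 : (0:ℝ) < q - 1 := by linarith [S.hq]
  have hb2 : 0 < 1/(2*(q-1))/2 := by positivity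
  have hul := S.ulow hb2 (by linarith [S.hbpos])
  have hutop : Tendsto (u q lam g) atTop atTop := by
    apply tendsto_atTop_mono' _ _ (tendsto_id.const_mul_atTop
      (by have := S.hbpos; linarith : (0:ℝ) < 1/(2*(q-1)) - 1/(2*(q-1))/2))
    filter_upwards [hul] with x hx
    exact hx
  have h2 : Tendsto (fun x => (u q lam g x / lam) ^ (1/(q-1))) atTop atTop :=
    (tendsto_rpow_atTop (by positivity)).comp (hutop.atTop_div_const S.hlam)
  apply h2.congr'
  filter_upwards [eventually_gt_atTop 0] with x hx
  have hgx := S.gpos hx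
  simp only [u]
  rw [mul_div_cancel_left₀ _ (ne_of_gt S.hlam), ← Real.rpow_mul (le_of_lt hgx),
    mul_one_div, div_self (by linarith : q - 1 ≠ 0), Real.rpow_one]

lemma Setting.ftop (S : Setting q lam f g) : Tendsto f atTop atTop := by
  obtain ⟨A₀, hA₀⟩ := eventually_atTop.1 (S.gtop.eventually_ge_atTop 1)
  set A := max A₀ 1 with hAdef
  have hA0 : (0:ℝ) < A := lt_of_lt_of_le one_pos (le_max_right _ _)
  have hmono : MonotoneOn (fun x => f x - x) (Ici A) := by
    refine monoIci (φ' := fun x => g x - 1) ?_ ?_ ?_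
    · exact (S.hfc.mono (Ici_subset_Ici.2 (le_of_lt hA0))).sub continuous_id.continuousOn
    · intro x hx
      exact (S.hf' x (lt_trans hA0 hx)).sub (hasDerivAt_id x)
    · intro x hx
      have := hA₀ x (le_of_lt (lt_of_le_of_lt (le_max_left _ _) hx))
      show (0:ℝ) ≤ g x - 1
      linarith
  apply tendsto_atTop_mono' _ _ (tendsto_atTop_add_const_right atTop (f A - A) tendsto_id)
  filter_upwards [eventually_ge_atTop A] with x hx
  have h2 : f A - A ≤ f x - x := hmono self_mem_Ici (mem_Ici.2 hx) hx
  simp only [id]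
  linarith

lemma Setting.uhalf (S : Setting q lam f g) : ∀ᶠ x in atTop, u q lam g x ≤ x/2 := by
  filter_upwards [S.ftop.eventually_ge_atTop 0, eventually_gt_atTop 0] with x hf0 hx
  have hgx := S.gpos hx
  have hG := S.Gpos x (le_of_lt hx)
  have hgq : (g x)^(q-1) * g x = (g x)^q := by
    have h := Real.rpow_add_one (ne_of_gt hgx) (q-1)
    rw [show q - 1 + 1 = q by ring] at h
    exact h.symm
  have habs : |g x| = g x := abs_of_pos hgx
  have h1 : 0 < g x * (x/2 - u q lam g x) := by
    have hc := S.hcpos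
    simp only [G, habs] at hG
    simp only [u]
    have e : g x * (x/2 - lam * g x ^ (q-1)) = x/2 * g x - lam * (g x ^ (q-1) * g x) := by ring
    rw [e, hgq]
    nlinarith [hG, mul_nonneg (le_of_lt hc) hf0]
  have h2 : 0 < x/2 - u q lam g x := by
    by_contra hcon
    push_neg at hcon
    have : g x * (x/2 - u q lam g x) ≤ 0 :=
      mul_nonpos_of_nonneg_of_nonpos (le_of_lt hgx) hcon
    linarith
  linarith

lemma Setting.hqb (S : Setting q lam f g) : q * (1/(2*(q-1))) = 1/2 + 1/(2*(q-1)) := by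
  have h : q - 1 ≠ 0 := by have := S.hq; linarith
  field_simp
  try ring

lemma Setting.margin (S : Setting q lam f g) {y : ℝ} (hy : 0 ≤ y)
    (h : (1/(2*(q-1)) - 1/(2*(q-1))/(2*q)) * y ≤ u q lam g y) :
    y/2 - q * u q lam g y ≤ -(1/(2*(q-1))/2) * y := by
  have hqb := S.hqb
  have hq0 : (0:ℝ) < q := by linarith [S.hq]
  have hqne : q ≠ 0 := ne_of_gt hq0
  have h1 : q - 1 ≠ 0 := by have := S.hq; linarith
  have h2 : q * ((1/(2*(q-1)) - 1/(2*(q-1))/(2*q)) * y) ≤ q * u q lam g y :=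
    mul_le_mul_of_nonneg_left h (le_of_lt hq0)
  have h3 : q * (1/(2*(q-1))/(2*q)) = 1/(2*(q-1))/2 := by
    field_simp
    try ring
  nlinarith [h2, hqb, h3]

lemma Setting.Gle4 (S : Setting q lam f g) :
    ∀ᶠ x in atTop, x * G q lam f g x ≤ 4 * g x := by
  have hbpos : (0:ℝ) < 1/(2*(q-1)) := S.hbpos
  have hδ : (0:ℝ) < 1/(2*(q-1))/(2*q) := by have := S.hq; positivity
  have hδb : 1/(2*(q-1))/(2*q) ≤ 1/(2*(q-1)) := by
    rw [div_le_iff₀ (by have := S.hq; positivity : (0:ℝ) < 2*q)]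
    nlinarith [S.hq, hbpos]
  obtain ⟨A₁, hA₁⟩ := eventually_atTop.1 (S.ulow hδ hδb)
  obtain ⟨A₂, hA₂⟩ := eventually_atTop.1 (S.gtop.eventually_ge_atTop 1)
  have key : ∀ᶠ x in atTop, x * G q lam f g x - 4 * g x ≤ 0 := by
    refine inv_enter (ρ := 1/(2*(q-1))) hbpos (A := max 1 (max A₁ A₂))
      (ψ' := fun y => G q lam f g y
        + y*(1/(2*(q-1))*g y + (y/2 - q*u q lam g y)*G q lam f g y) - 4*G q lam f g y) ?_ ?_
    · intro y hy
      have hy0 : (0:ℝ) < y := lt_of_lt_of_le one_pos (le_trans (le_max_left _ _) hy)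
      have hgy : 0 < g y := S.gpos hy0
      have hgd : HasDerivAt g (G q lam f g y) y := S.hg' y hy0
      have hGd := S.hG' hy0 hgy
      have := ((hasDerivAt_id y).mul hGd).sub (hgd.const_mul 4)
      exact this.congr_deriv (by simp only [id_eq]; ring)
    · intro y hy hpos
      have hy1 : (1:ℝ) ≤ y := le_trans (le_max_left _ _) hy
      have hy0 : (0:ℝ) < y := by linarith
      have hgy1 : (1:ℝ) ≤ g y :=
        hA₂ y (le_trans (le_trans (le_max_right _ _) (le_max_right _ _)) hy)
      have hul : (1/(2*(q-1)) - 1/(2*(q-1))/(2*q)) * y ≤ u q lam g y :=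
        hA₁ y (le_trans (le_trans (le_max_left _ _) (le_max_right _ _)) hy)
      have ha : y/2 - q * u q lam g y ≤ -(1/(2*(q-1))/2) * y := S.margin (le_of_lt hy0) hul
      have hG := S.Gpos y (le_of_lt hy0)
      have hψ : 4 * g y ≤ y * G q lam f g y := by
        have hpos' : (0:ℝ) ≤ y * G q lam f g y - 4 * g y := hpos
        linarith
      have haG : y * ((y/2 - q*u q lam g y) * G q lam f g y)
          ≤ y * (-(1/(2*(q-1))/2) * y * G q lam f g y) := by
        apply mul_le_mul_of_nonneg_left _ (le_of_lt hy0)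
        exact mul_le_mul_of_nonneg_right ha (le_of_lt hG)
      have h2 : y * (-(1/(2*(q-1))/2) * y * G q lam f g y)
          = -(1/(2*(q-1))/2) * y * (y * G q lam f g y) := by ring
      have h3 : -(1/(2*(q-1))/2) * y * (y * G q lam f g y)
          ≤ -(1/(2*(q-1))/2) * y * (4 * g y) := by
        apply mul_le_mul_of_nonpos_left hψ
        nlinarith
      have h7 : -(1/(2*(q-1))/2) * y * (4 * g y) = -2 * (1/(2*(q-1))) * (y * g y) := by ring
      have h5 : (1:ℝ) ≤ y * g y := by nlinarith
      have h6 : 1/(2*(q-1)) * 1 ≤ 1/(2*(q-1)) * (y * g y) :=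
        mul_le_mul_of_nonneg_left h5 (le_of_lt hbpos)
      have h8 : y*(1/(2*(q-1))*g y + (y/2 - q*u q lam g y)*G q lam f g y)
          = 1/(2*(q-1)) * (y * g y) + y*((y/2 - q*u q lam g y)*G q lam f g y) := by ring
      show G q lam f g y
        + y*(1/(2*(q-1))*g y + (y/2 - q*u q lam g y)*G q lam f g y) - 4*G q lam f g y
        ≤ -(1/(2*(q-1)))
      rw [h8]
      linarith [haG, h2, h3, h7, h6, hG]
  filter_upwards [key] with x hx
  linarith

end KPZaux
namespace KPZaux
noncomputable def Phi (q lam : ℝ) (f g : ℝ → ℝ) : ℝ → ℝ :=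
  fun y => 1/(2*(q-1))*g y + (y/2 - q*u q lam g y)*G q lam f g y

variable {q lam : ℝ} {f g : ℝ → ℝ}

lemma Setting.hPhi' (S : Setting q lam f g) {y : ℝ} (hy : 0 < y) :
    HasDerivAt (Phi q lam f g)
      (1/(2*(q-1))*G q lam f g y
        + ((1/2 - q*(lam*(q-1)*(g y)^(q-2)*G q lam f g y))*G q lam f g y
          + (y/2 - q*u q lam g y)*(Phi q lam f g y))) y := by
  have hgy : 0 < g y := S.gpos hy
  have h1 : HasDerivAt g (G q lam f g y) y := S.hg' y hy
  have h2 := (h1.const_mul (1/(2*(q-1))))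
  have h3 : HasDerivAt (fun z : ℝ => z/2 - q * u q lam g z)
      (1/2 - q*(lam*(q-1)*(g y)^(q-2)*G q lam f g y)) y := by
    have := ((hasDerivAt_id y).div_const 2).sub ((S.hu' hy).const_mul q)
    exact this
  have h4 := h3.mul (S.hG' hy hgy)
  have h5 := h2.add h4
  have heq : (fun z => 1/(2*(q-1)) * g z + (z/2 - q * u q lam g z) * G q lam f g z)
      = Phi q lam f g := rfl
  replace h5 : HasDerivAt (Phi q lam f g) _ y := h5
  convert h5 using 1
  try simp only [Phi]
  try ring

set_option maxHeartbeats 1000000 in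
lemma Setting.phi_bound (S : Setting q lam f g) {δ : ℝ} (hδ : 0 < δ) :
    ∀ᶠ x in atTop, |Phi q lam f g x| ≤ δ * g x := by
  have hq2 : (2:ℝ) < q := S.hq
  have hbpos : (0:ℝ) < 1/(2*(q-1)) := S.hbpos
  have hδ1 : (0:ℝ) < 1/(2*(q-1))/(2*q) := by positivity
  have hδb : 1/(2*(q-1))/(2*q) ≤ 1/(2*(q-1)) := by
    rw [div_le_iff₀ (by positivity : (0:ℝ) < 2*q)]
    nlinarith [hbpos]
  have hall : ∀ᶠ y in atTop, (1:ℝ) ≤ y ∧ 1 ≤ g y ∧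
      y * G q lam f g y ≤ 4 * g y ∧ u q lam g y ≤ y/2 ∧
      y/2 - q * u q lam g y ≤ -(1/(2*(q-1))/2) * y ∧
      8*q*(q-1) + 1 ≤ 1/(2*(q-1))/2 * δ * y ∧
      lam * (g y)^(q-2) * G q lam f g y ≤ 2 := by
    filter_upwards [S.ulow hδ1 hδb, S.gtop.eventually_ge_atTop 1, S.Gle4, S.uhalf,
      eventually_ge_atTop (1:ℝ),
      eventually_ge_atTop ((8*q*(q-1) + 1)/(1/(2*(q-1))/2 * δ))] with y h1 h2 h3 h4 h5 h6
    have hy0 : (0:ℝ) < y := by linarith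
    have hgy : 0 < g y := S.gpos hy0
    refine ⟨h5, h2, h3, h4, S.margin (le_of_lt hy0) h1, ?_, ?_⟩
    · rw [div_le_iff₀ (by positivity : (0:ℝ) < 1/(2*(q-1))/2 * δ)] at h6
      linarith
    · have hG := S.Gpos y (le_of_lt hy0)
      have hKnn : (0:ℝ) ≤ lam * (g y)^(q-2) :=
        le_of_lt (mul_pos S.hlam (Real.rpow_pos_of_pos hgy _))
      have hgq2 : (g y)^(q-2) * g y = (g y)^(q-1) := by
        have h := Real.rpow_add_one (ne_of_gt hgy) (q-2)
        rw [show q - 2 + 1 = q - 1 by ring] at h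
        exact h.symm
      have s1 : lam * (g y)^(q-2) * (y * G q lam f g y) ≤ lam * (g y)^(q-2) * (4 * g y) :=
        mul_le_mul_of_nonneg_left h3 hKnn
      have s2 : lam * (g y)^(q-2) * (4 * g y) = 4 * (lam * ((g y)^(q-2) * g y)) := by ring
      rw [s2, hgq2] at s1
      have s3 : 4 * (lam * (g y)^(q-1)) ≤ 2 * y := by
        have : u q lam g y ≤ y/2 := h4
        simp only [u] at this
        linarith
      have s4 : y * (lam * (g y)^(q-2) * G q lam f g y) ≤ y * 2 := by nlinarith [s1, s3]
      exact le_of_mul_le_mul_left s4 hy0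
  obtain ⟨A, hA⟩ := eventually_atTop.1 hall
  have hb12 : 1/(2*(q-1)) ≤ 1/2 := by
    rw [div_le_div_iff₀ (by linarith) (by norm_num)]
    linarith
  have upper : ∀ᶠ x in atTop, Phi q lam f g x - δ * g x ≤ 0 := by
    refine inv_enter (ρ := 1) one_pos (A := A)
      (ψ' := fun y => (1/(2*(q-1))*G q lam f g y
        + ((1/2 - q*(lam*(q-1)*(g y)^(q-2)*G q lam f g y))*G q lam f g y
          + (y/2 - q*u q lam g y)*(Phi q lam f g y))) - δ * G q lam f g y) ?_ ?_
    · intro y hy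
      have hy0 : (0:ℝ) < y := by linarith [(hA y hy).1]
      exact (S.hPhi' hy0).sub ((S.hg' y hy0).const_mul δ)
    · intro y hy hpos
      obtain ⟨hy1, hg1, hyG, huh, hmar, hbig, ht⟩ := hA y hy
      have hy0 : (0:ℝ) < y := by linarith
      have hgy : 0 < g y := S.gpos hy0
      have hG := S.Gpos y (le_of_lt hy0)
      have hΦ : δ * g y ≤ Phi q lam f g y := by
        have h' : (0:ℝ) ≤ Phi q lam f g y - δ * g y := hpos
        linarith
      have hG4 : G q lam f g y ≤ 4 * g y := by nlinarith [hyG, hG, hy1]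
      have hKnn : (0:ℝ) ≤ lam*(q-1)*(g y)^(q-2) :=
        le_of_lt (mul_pos (mul_pos S.hlam (by linarith)) (Real.rpow_pos_of_pos hgy _))
      have hKG : (0:ℝ) ≤ q*(lam*(q-1)*(g y)^(q-2)*G q lam f g y)*G q lam f g y :=
        mul_nonneg (mul_nonneg (by linarith) (mul_nonneg hKnn hG.le)) hG.le
      have haΦ : (y/2 - q*u q lam g y) * Phi q lam f g y
          ≤ -(1/(2*(q-1))/2) * y * (δ * g y) := by
        have hΦpos : 0 < Phi q lam f g y := lt_of_lt_of_le (mul_pos hδ hgy) hΦ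
        have s1 : (y/2 - q*u q lam g y) * Phi q lam f g y
            ≤ (-(1/(2*(q-1))/2) * y) * Phi q lam f g y :=
          mul_le_mul_of_nonneg_right hmar (le_of_lt hΦpos)
        have s2 : (-(1/(2*(q-1))/2) * y) * Phi q lam f g y
            ≤ (-(1/(2*(q-1))/2) * y) * (δ * g y) :=
          mul_le_mul_of_nonpos_left hΦ (by nlinarith [hbpos])
        linarith
      have hbigg : (8*q*(q-1)+1) * g y ≤ (1/(2*(q-1))/2 * δ * y) * g y :=
        mul_le_mul_of_nonneg_right hbig (le_of_lt hgy)
      have heq : -(1/(2*(q-1))/2) * y * (δ * g y) = -((1/(2*(q-1))/2 * δ * y) * g y) := by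
        ring
      have h10 : (1/(2*(q-1)))*G q lam f g y ≤ (1/2)*G q lam f g y :=
        mul_le_mul_of_nonneg_right hb12 hG.le
      have hδG : (0:ℝ) ≤ δ * G q lam f g y := mul_nonneg (le_of_lt hδ) hG.le
      have h13 : (13:ℝ) ≤ 8*q*(q-1) - 3 := by
        nlinarith [mul_nonneg (by linarith : (0:ℝ) ≤ q-2) (by linarith : (0:ℝ) ≤ q+1)]
      have h12 : (1:ℝ) ≤ (8*q*(q-1) - 3) * g y := by
        have := mul_le_mul h13 hg1 (by norm_num) (by linarith)
        linarith
      show (1/(2*(q-1))*G q lam f g y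
        + ((1/2 - q*(lam*(q-1)*(g y)^(q-2)*G q lam f g y))*G q lam f g y
          + (y/2 - q*u q lam g y)*(Phi q lam f g y))) - δ * G q lam f g y ≤ -1
      have h9 : (1/2 - q*(lam*(q-1)*(g y)^(q-2)*G q lam f g y))*G q lam f g y
          = (1/2)*G q lam f g y
            - q*(lam*(q-1)*(g y)^(q-2)*G q lam f g y)*G q lam f g y := by ring
      rw [h9]
      linarith [haΦ, heq, hbigg, h10, hδG, hKG, hG4, h12]
  have lower : ∀ᶠ x in atTop, -Phi q lam f g x - δ * g x ≤ 0 := by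
    refine inv_enter (ρ := 1) one_pos (A := A)
      (ψ' := fun y => -(1/(2*(q-1))*G q lam f g y
        + ((1/2 - q*(lam*(q-1)*(g y)^(q-2)*G q lam f g y))*G q lam f g y
          + (y/2 - q*u q lam g y)*(Phi q lam f g y))) - δ * G q lam f g y) ?_ ?_
    · intro y hy
      have hy0 : (0:ℝ) < y := by linarith [(hA y hy).1]
      exact ((S.hPhi' hy0).neg).sub ((S.hg' y hy0).const_mul δ)
    · intro y hy hpos
      obtain ⟨hy1, hg1, hyG, huh, hmar, hbig, ht⟩ := hA y hy
      have hy0 : (0:ℝ) < y := by linarith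
      have hgy : 0 < g y := S.gpos hy0
      have hG := S.Gpos y (le_of_lt hy0)
      have hΦ : Phi q lam f g y ≤ -(δ * g y) := by
        have h' : (0:ℝ) ≤ -Phi q lam f g y - δ * g y := hpos
        linarith
      have hG4 : G q lam f g y ≤ 4 * g y := by nlinarith [hyG, hG, hy1]
      have hKnn : (0:ℝ) ≤ lam*(g y)^(q-2) :=
        le_of_lt (mul_pos S.hlam (Real.rpow_pos_of_pos hgy _))
      have haΦ : (1/(2*(q-1))/2 * y) * (δ * g y)
          ≤ (y/2 - q*u q lam g y) * Phi q lam f g y := by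
        have hb2y : (0:ℝ) ≤ 1/(2*(q-1))/2 * y := mul_nonneg (by linarith [hbpos]) hy0.le
        have s1 : (1/(2*(q-1))/2 * y) * (δ * g y)
            ≤ (-(y/2 - q*u q lam g y)) * (-(Phi q lam f g y)) := by
          apply mul_le_mul
          · linarith
          · linarith
          · exact le_of_lt (mul_pos hδ hgy)
          · linarith
        nlinarith [s1]
      have hKGb : q*(lam*(q-1)*(g y)^(q-2)*G q lam f g y)*G q lam f g y
          ≤ 8*q*(q-1) * g y := by
        have s1 : (lam*(g y)^(q-2)*G q lam f g y) * G q lam f g y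
            ≤ 2 * G q lam f g y := mul_le_mul_of_nonneg_right ht hG.le
        have s2 : 2 * G q lam f g y ≤ 2 * (4 * g y) := by linarith
        have s3 : q*(q-1) ≥ 0 := by nlinarith
        have e : q*(lam*(q-1)*(g y)^(q-2)*G q lam f g y)*G q lam f g y
            = (q*(q-1)) * ((lam*(g y)^(q-2)*G q lam f g y) * G q lam f g y) := by ring
        rw [e]
        calc (q*(q-1)) * ((lam*(g y)^(q-2)*G q lam f g y) * G q lam f g y)
            ≤ (q*(q-1)) * (2 * (4 * g y)) := by
              apply mul_le_mul_of_nonneg_left _ s3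
              linarith
          _ = 8*q*(q-1) * g y := by ring
      have hbigg : (8*q*(q-1)+1) * g y ≤ (1/(2*(q-1))/2 * δ * y) * g y :=
        mul_le_mul_of_nonneg_right hbig (le_of_lt hgy)
      have hbG : (0:ℝ) ≤ 1/(2*(q-1))*G q lam f g y := mul_nonneg (le_of_lt hbpos) hG.le
      have hhG : (0:ℝ) ≤ (1/2)*G q lam f g y := mul_nonneg (by norm_num) hG.le
      have hδG : (0:ℝ) ≤ δ * G q lam f g y := mul_nonneg (le_of_lt hδ) hG.le
      show -(1/(2*(q-1))*G q lam f g y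
        + ((1/2 - q*(lam*(q-1)*(g y)^(q-2)*G q lam f g y))*G q lam f g y
          + (y/2 - q*u q lam g y)*(Phi q lam f g y))) - δ * G q lam f g y ≤ -1
      have h12 : (1:ℝ) ≤ g y := hg1
      have heq2 : (1/(2*(q-1))/2 * y) * (δ * g y) = (1/(2*(q-1))/2 * δ * y) * g y := by ring
      linarith [haΦ, hKGb, hbigg, hbG, hhG, hδG, heq2, h12]
  filter_upwards [upper, lower] with x h1 h2
  rw [abs_le]
  constructor <;> linarith

lemma Setting.hbq (S : Setting q lam f g) : 1/(2*(q-1))*(q-1) = 1/2 := by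
  have h : q - 1 ≠ 0 := by have := S.hq; linarith
  field_simp

lemma Setting.key_ineq (S : Setting q lam f g) {x δ : ℝ} (hx : 0 < x) (hδ : 0 < δ)
    (hphi : |Phi q lam f g x| ≤ δ * g x) :
    (q * u q lam g x - x/2) * (lam*(q-1)*(g x)^(q-2) * G q lam f g x)
        ≤ (1/2 + δ*(q-1)) * u q lam g x
      ∧ (1/2 - δ*(q-1)) * u q lam g x
        ≤ (q * u q lam g x - x/2) * (lam*(q-1)*(g x)^(q-2) * G q lam f g x) := by
  have hq2 := S.hq
  have hgx := S.gpos hx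
  have hgq2 : (g x)^(q-2) * g x = (g x)^(q-1) := by
    have h := Real.rpow_add_one (ne_of_gt hgx) (q-2)
    rw [show q - 2 + 1 = q - 1 by ring] at h
    exact h.symm
  have habs := abs_le.1 hphi
  have h1 : -(δ * g x) - 1/(2*(q-1))*g x ≤ (x/2 - q*u q lam g x)*G q lam f g x := by
    have := habs.1
    simp only [Phi] at this ⊢
    linarith
  have h2 : (x/2 - q*u q lam g x)*G q lam f g x ≤ δ * g x - 1/(2*(q-1))*g x := by
    have := habs.2
    simp only [Phi] at this ⊢
    linarith
  have hKnn : (0:ℝ) ≤ lam*(q-1)*(g x)^(q-2) :=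
    le_of_lt (mul_pos (mul_pos S.hlam (by linarith)) (Real.rpow_pos_of_pos hgx _))
  have hbq := S.hbq
  have hu_eq : lam*(q-1)*(g x)^(q-2) * g x = (q-1) * u q lam g x := by
    simp only [u]
    rw [show lam*(q-1)*(g x)^(q-2) * g x = lam*(q-1)*((g x)^(q-2) * g x) by ring, hgq2]
    ring
  constructor
  · have h3 := mul_le_mul_of_nonneg_left h1 hKnn
    have e1 : lam*(q-1)*(g x)^(q-2) * ((x/2 - q*u q lam g x)*G q lam f g x)
        = -((q * u q lam g x - x/2) * (lam*(q-1)*(g x)^(q-2) * G q lam f g x)) := by ring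
    have e2 : lam*(q-1)*(g x)^(q-2) * (-(δ * g x) - 1/(2*(q-1))*g x)
        = -((δ + 1/(2*(q-1))) * (lam*(q-1)*(g x)^(q-2) * g x)) := by ring
    rw [e1, e2, hu_eq] at h3
    have e3 : (δ + 1/(2*(q-1))) * ((q-1) * u q lam g x)
        = (δ*(q-1) + 1/(2*(q-1))*(q-1)) * u q lam g x := by ring
    rw [e3, hbq] at h3
    linarith
  · have h3 := mul_le_mul_of_nonneg_left h2 hKnn
    have e1 : lam*(q-1)*(g x)^(q-2) * ((x/2 - q*u q lam g x)*G q lam f g x)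
        = -((q * u q lam g x - x/2) * (lam*(q-1)*(g x)^(q-2) * G q lam f g x)) := by ring
    have e2 : lam*(q-1)*(g x)^(q-2) * (δ * g x - 1/(2*(q-1))*g x)
        = (δ - 1/(2*(q-1))) * (lam*(q-1)*(g x)^(q-2) * g x) := by ring
    rw [e1, e2, hu_eq] at h3
    have e3 : (δ - 1/(2*(q-1))) * ((q-1) * u q lam g x)
        = (δ*(q-1) - 1/(2*(q-1))*(q-1)) * u q lam g x := by ring
    rw [e3, hbq] at h3
    linarith

set_option maxHeartbeats 1000000 in
lemma Setting.upper_eps (S : Setting q lam f g) {ε : ℝ} (hε : 0 < ε) (hε2 : ε ≤ 1/(2*q)) :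
    ∀ᶠ x in atTop, u q lam g x ≤ (1/q + ε)*x := by
  have hq2 := S.hq
  have hq0 : (0:ℝ) < q := by linarith
  have hqε : q * ε ≤ 1/2 := by
    have h0 := mul_le_mul_of_nonneg_left hε2 (le_of_lt hq0)
    have e : q*(1/(2*q)) = 1/2 := by
      rw [mul_one_div, div_eq_div_iff (by linarith : (2*q:ℝ) ≠ 0) (by norm_num : (2:ℝ) ≠ 0)]
      ring
    linarith [h0, e.le, e.ge]
  have hηq : q * (1/q) = 1 := mul_one_div_cancel (ne_of_gt hq0)
  set δ : ℝ := q*ε/(4*(q-1)) with hδdef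
  have hδpos : 0 < δ := by
    rw [hδdef]
    exact div_pos (mul_pos hq0 hε) (by linarith)
  have hδq : δ*(q-1) = q*ε/4 := by
    have h1 : q - 1 ≠ 0 := by linarith
    rw [hδdef]
    field_simp
  have key : ∀ᶠ x in atTop, u q lam g x - (1/q + ε)*x ≤ 0 := by
    have hall : ∀ᶠ y in atTop, (1:ℝ) ≤ y ∧ |Phi q lam f g y| ≤ δ * g y := by
      filter_upwards [eventually_ge_atTop (1:ℝ), S.phi_bound hδpos] with y h1 h2
      exact ⟨h1, h2⟩
    obtain ⟨A, hA⟩ := eventually_atTop.1 hall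
    refine inv_enter (ρ := ε) hε (A := A)
      (ψ' := fun y => lam*(q-1)*(g y)^(q-2) * G q lam f g y - (1/q + ε)) ?_ ?_
    · intro y hy
      have hy0 : (0:ℝ) < y := by linarith [(hA y hy).1]
      have := (S.hu' hy0).sub ((hasDerivAt_id y).const_mul (1/q + ε))
      exact this.congr_deriv (by ring)
    · intro y hy hpos
      obtain ⟨hy1, hphi⟩ := hA y hy
      have hy0 : (0:ℝ) < y := by linarith
      have hreg : (1/q + ε)*y ≤ u q lam g y := by
        have h' : (0:ℝ) ≤ u q lam g y - (1/q + ε)*y := hpos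
        linarith
      have hw : (1 + q*ε)*y ≤ q * u q lam g y := by
        have h0 := mul_le_mul_of_nonneg_left hreg (le_of_lt hq0)
        have e : q*((1/q + ε)*y) = (q*(1/q))*y + q*ε*y := by ring
        rw [hηq] at e
        linarith [h0, e.le, e.ge]
      have hpos2 : 0 < q * u q lam g y - y/2 := by
        linarith [hw, hy0, mul_pos (mul_pos hq0 hε) hy0]
      obtain ⟨hk1, _⟩ := S.key_ineq hy0 hδpos hphi
      -- (1/2 + δ(q-1)) u ≤ (qu - y/2) * (1/q)
      have hP : q * ((1/2 + δ*(q-1)) * u q lam g y) ≤ q * u q lam g y - y/2 := by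
        rw [hδq]
        have hs : (0:ℝ) ≤ q*ε := le_of_lt (mul_pos hq0 hε)
        have h38 : (0:ℝ) ≤ 1/2 - q*ε/4 := by linarith
        have hA := mul_le_mul_of_nonneg_right hw h38
        have hB : (0:ℝ) ≤ (q*ε*y) * (1 - q*ε) :=
          mul_nonneg (mul_nonneg hs (le_of_lt hy0)) (by linarith)
        nlinarith [hA, hB]
      have hM : (1/2 + δ*(q-1)) * u q lam g y ≤ (q * u q lam g y - y/2) * (1/q) := by
        have := mul_le_mul_of_nonneg_left hP (le_of_lt (one_div_pos.2 hq0))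
        calc (1/2 + δ*(q-1)) * u q lam g y
            = (1/q) * (q * ((1/2 + δ*(q-1)) * u q lam g y)) := by
              rw [show (1/q) * (q * ((1/2 + δ*(q-1)) * u q lam g y))
                = (q * (1/q)) * ((1/2 + δ*(q-1)) * u q lam g y) by ring, hηq]
              ring
          _ ≤ (1/q) * (q * u q lam g y - y/2) := this
          _ = (q * u q lam g y - y/2) * (1/q) := by ring
      have hfin : lam*(q-1)*(g y)^(q-2) * G q lam f g y ≤ 1/q := by
        have hc : (q * u q lam g y - y/2) * (lam*(q-1)*(g y)^(q-2) * G q lam f g y)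
            ≤ (q * u q lam g y - y/2) * (1/q) := le_trans hk1 hM
        exact le_of_mul_le_mul_left hc hpos2
      show lam*(q-1)*(g y)^(q-2) * G q lam f g y - (1/q + ε) ≤ -ε
      linarith
  filter_upwards [key] with x hx
  linarith

set_option maxHeartbeats 1000000 in
lemma Setting.lower_eps (S : Setting q lam f g) {ε : ℝ} (hε : 0 < ε) (hε2 : ε ≤ 1/(2*q)) :
    ∀ᶠ x in atTop, (1/q - ε)*x ≤ u q lam g x := by
  have hq2 := S.hq
  have hq0 : (0:ℝ) < q := by linarith
  have hqε : q * ε ≤ 1/2 := by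
    have h0 := mul_le_mul_of_nonneg_left hε2 (le_of_lt hq0)
    have e : q*(1/(2*q)) = 1/2 := by
      rw [mul_one_div, div_eq_div_iff (by linarith : (2*q:ℝ) ≠ 0) (by norm_num : (2:ℝ) ≠ 0)]
      ring
    linarith [h0, e.le, e.ge]
  have hηq : q * (1/q) = 1 := mul_one_div_cancel (ne_of_gt hq0)
  set δ : ℝ := q*ε/(4*(q-1)) with hδdef
  have hδpos : 0 < δ := by
    rw [hδdef]
    exact div_pos (mul_pos hq0 hε) (by linarith)
  have hδq : δ*(q-1) = q*ε/4 := by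
    have h1 : q - 1 ≠ 0 := by linarith
    rw [hδdef]
    field_simp
  have hbpos := S.hbpos
  have hδ1 : (0:ℝ) < 1/(2*(q-1))/(2*q) := by positivity
  have hδb : 1/(2*(q-1))/(2*q) ≤ 1/(2*(q-1)) := by
    rw [div_le_iff₀ (by positivity : (0:ℝ) < 2*q)]
    nlinarith [hbpos]
  have key : ∀ᶠ x in atTop, (1/q - ε)*x - u q lam g x ≤ 0 := by
    have hall : ∀ᶠ y in atTop, (1:ℝ) ≤ y ∧ |Phi q lam f g y| ≤ δ * g y ∧
        y/2 - q * u q lam g y ≤ -(1/(2*(q-1))/2) * y := by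
      filter_upwards [eventually_ge_atTop (1:ℝ), S.phi_bound hδpos,
        S.ulow hδ1 hδb, eventually_gt_atTop (0:ℝ)] with y h1 h2 h3 h4
      exact ⟨h1, h2, S.margin (le_of_lt h4) h3⟩
    obtain ⟨A, hA⟩ := eventually_atTop.1 hall
    refine inv_enter (ρ := ε/4) (by linarith) (A := A)
      (ψ' := fun y => (1/q - ε) - lam*(q-1)*(g y)^(q-2) * G q lam f g y) ?_ ?_
    · intro y hy
      have hy0 : (0:ℝ) < y := by linarith [(hA y hy).1]
      have := ((hasDerivAt_id y).const_mul (1/q - ε)).sub (S.hu' hy0)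
      exact this.congr_deriv (by ring)
    · intro y hy hpos
      obtain ⟨hy1, hphi, hmar⟩ := hA y hy
      have hy0 : (0:ℝ) < y := by linarith
      have hreg : u q lam g y ≤ (1/q - ε)*y := by
        have h' : (0:ℝ) ≤ (1/q - ε)*y - u q lam g y := hpos
        linarith
      have hw : q * u q lam g y ≤ (1 - q*ε)*y := by
        have h0 := mul_le_mul_of_nonneg_left hreg (le_of_lt hq0)
        have e : q*((1/q - ε)*y) = (q*(1/q))*y - q*ε*y := by ring
        rw [hηq] at e
        linarith [h0, e.le, e.ge]
      have hpos2 : 0 < q * u q lam g y - y/2 := by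
        have : (0:ℝ) < 1/(2*(q-1))/2 * y := by positivity
        linarith [hmar]
      obtain ⟨_, hk2⟩ := S.key_ineq hy0 hδpos hphi
      -- (qu - y/2) * C ≤ (1/2 - δ(q-1)) u  with C = 1/q - 3ε/4
      have hq' : q * ((q * u q lam g y - y/2) * (1/q - 3*ε/4))
          ≤ q * ((1/2 - δ*(q-1)) * u q lam g y) := by
        rw [hδq]
        have e : q * ((q * u q lam g y - y/2) * (1/q - 3*ε/4))
            = (q * u q lam g y - y/2) * (q*(1/q) - 3*q*ε/4) := by ring
        rw [e, hηq]
        have hs : (0:ℝ) ≤ q*ε := le_of_lt (mul_pos hq0 hε)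
        have h12s : (0:ℝ) ≤ 1/2 - q*ε/2 := by linarith
        have hA := mul_le_mul_of_nonneg_right hw h12s
        have hB : (0:ℝ) ≤ (y * (q*ε)) * (5/4 - q*ε) :=
          mul_nonneg (mul_nonneg (le_of_lt hy0) hs) (by linarith)
        nlinarith [hA, hB]
      have hC : (q * u q lam g y - y/2) * (1/q - 3*ε/4)
          ≤ (1/2 - δ*(q-1)) * u q lam g y := by
        have := mul_le_mul_of_nonneg_left hq' (le_of_lt (one_div_pos.2 hq0))
        calc (q * u q lam g y - y/2) * (1/q - 3*ε/4)
            = (1/q) * (q * ((q * u q lam g y - y/2) * (1/q - 3*ε/4))) := by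
              rw [show (1/q) * (q * ((q * u q lam g y - y/2) * (1/q - 3*ε/4)))
                = (q * (1/q)) * ((q * u q lam g y - y/2) * (1/q - 3*ε/4)) by ring, hηq]
              ring
          _ ≤ (1/q) * (q * ((1/2 - δ*(q-1)) * u q lam g y)) := this
          _ = (q * (1/q)) * ((1/2 - δ*(q-1)) * u q lam g y) := by ring
          _ = (1/2 - δ*(q-1)) * u q lam g y := by rw [hηq]; ring
      have hfin : 1/q - 3*ε/4 ≤ lam*(q-1)*(g y)^(q-2) * G q lam f g y := by
        have hc : (q * u q lam g y - y/2) * (1/q - 3*ε/4)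
            ≤ (q * u q lam g y - y/2) * (lam*(q-1)*(g y)^(q-2) * G q lam f g y) :=
          le_trans hC hk2
        exact le_of_mul_le_mul_left hc hpos2
      show (1/q - ε) - lam*(q-1)*(g y)^(q-2) * G q lam f g y ≤ -(ε/4)
      linarith
  filter_upwards [key] with x hx
  linarith

lemma Setting.vlim (S : Setting q lam f g) :
    Tendsto (fun x => u q lam g x / x) atTop (𝓝 (1/q)) := by
  have hq0 : (0:ℝ) < q := by linarith [S.hq]
  rw [Metric.tendsto_atTop]
  intro ε' hε'
  set ε : ℝ := min (ε'/2) (1/(2*q)) with hεdef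
  have hεpos : 0 < ε := lt_min (by linarith) (by positivity)
  have hε2 : ε ≤ 1/(2*q) := min_le_right _ _
  have hεε' : ε < ε' := lt_of_le_of_lt (min_le_left _ _) (by linarith)
  have h1 := S.upper_eps hεpos hε2
  have h2 := S.lower_eps hεpos hε2
  have h3 : ∀ᶠ x in atTop, dist (u q lam g x / x) (1/q) < ε' := by
    filter_upwards [h1, h2, eventually_ge_atTop (1:ℝ)] with x hu hl hx1
    have hx0 : (0:ℝ) < x := by linarith
    rw [Real.dist_eq, abs_lt]
    have ha : 1/q - ε ≤ u q lam g x / x := (le_div_iff₀ hx0).2 hl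
    have hb : u q lam g x / x ≤ 1/q + ε := (div_le_iff₀ hx0).2 hu
    constructor <;> linarith
  obtain ⟨N, hN⟩ := eventually_atTop.1 h3
  exact ⟨N, hN⟩

lemma core {q lam : ℝ} (hq : 2 < q) (hlam : 0 < lam) {f g : ℝ → ℝ}
    (hfc : ContinuousOn f (Ici 0)) (hgc : ContinuousOn g (Ici 0))
    (hf' : ∀ x : ℝ, 0 < x → HasDerivAt f (g x) x)
    (hg' : ∀ x : ℝ, 0 < x →
      HasDerivAt g (x/2 * g x - lam * |g x| ^ q - (q-2)/(2*(q-1)) * f x) x)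
    (hf0 : f 0 = -1) (hg0 : g 0 = 0) :
    Tendsto (fun ξ : ℝ => g ξ / ξ ^ (1/(q-1))) atTop (𝓝 ((1/(lam*q)) ^ (1/(q-1)))) := by
  have S : Setting q lam f g := ⟨hq, hlam, hfc, hgc, hf', hg', hf0, hg0⟩
  have hq0 : (0:ℝ) < q := by linarith
  have hq1 : (0:ℝ) < q - 1 := by linarith
  have hv := S.vlim
  have hcont : ContinuousAt (fun t : ℝ => (t/lam) ^ (1/(q-1))) (1/q) := by
    have h1 : ContinuousAt (fun t : ℝ => t/lam) (1/q) :=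
      (continuous_id.div_const lam).continuousAt
    have h2 : ContinuousAt (fun s : ℝ => s ^ (1/(q-1))) ((1/q)/lam) :=
      Real.continuousAt_rpow_const _ _ (Or.inl (by positivity))
    exact ContinuousAt.comp (g := fun s : ℝ => s ^ (1/(q-1))) h2 h1
  have hlim : Tendsto (fun x => ((u q lam g x / x)/lam) ^ (1/(q-1))) atTop
      (𝓝 (((1/q)/lam) ^ (1/(q-1)))) := hcont.tendsto.comp hv
  have hval : ((1/q)/lam : ℝ) = 1/(lam*q) := by
    rw [div_div, mul_comm]
  rw [hval] at hlim
  apply hlim.congr'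
  filter_upwards [eventually_ge_atTop (1:ℝ)] with x hx1
  have hx0 : (0:ℝ) < x := by linarith
  have hgx : 0 < g x := S.gpos hx0
  have e1 : (u q lam g x / x)/lam = (g x)^(q-1) / x := by
    simp only [u]
    field_simp
  rw [e1, Real.div_rpow (Real.rpow_nonneg (le_of_lt hgx) _) (le_of_lt hx0)]
  rw [← Real.rpow_mul (le_of_lt hgx), mul_one_div, div_self (ne_of_gt hq1), Real.rpow_one]

end KPZaux

theorem kpz_profile_deriv_asymptotics (q lam : ℝ) (hq : 2 < q) (hlam : 0 < lam)
    (f : ℝ → ℝ)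
    (hsol : SolvesKPZProfile q lam (Set.Ici 0) f)
    (hf0 : f 0 = -1)
    (hf'0 : derivWithin f (Set.Ici 0) 0 = 0) :
    Tendsto (fun ξ : ℝ => derivWithin f (Set.Ici 0) ξ / ξ ^ (1 / (q - 1))) atTop
      (𝓝 ((1 / (lam * q)) ^ (1 / (q - 1)))) := by
  obtain ⟨hcd, hode⟩ := hsol
  set s : Set ℝ := Set.Ici 0 with hs
  set g : ℝ → ℝ := derivWithin f s with hgdef
  have huniq : UniqueDiffOn ℝ s := uniqueDiffOn_Ici 0
  have hgcd : ContDiffOn ℝ 1 g s := hcd.derivWithin huniq (by norm_num)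
  have hfc : ContinuousOn f s := hcd.continuousOn
  have hgc : ContinuousOn g s := hgcd.continuousOn
  have hf' : ∀ x : ℝ, 0 < x → HasDerivAt f (g x) x := by
    intro x hx
    have hdf : DifferentiableWithinAt ℝ f s x :=
      (hcd.differentiableOn (by norm_num)) x (le_of_lt hx)
    exact hdf.hasDerivWithinAt.hasDerivAt (Ici_mem_nhds hx)
  have hg' : ∀ x : ℝ, 0 < x →
      HasDerivAt g (x/2 * g x - lam * |g x| ^ q - (q-2)/(2*(q-1)) * f x) x := by
    intro x hx
    have hdg : DifferentiableWithinAt ℝ g s x :=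
      (hgcd.differentiableOn (by norm_num)) x (le_of_lt hx)
    have h1 : HasDerivAt g (derivWithin g s x) x :=
      hdg.hasDerivWithinAt.hasDerivAt (Ici_mem_nhds hx)
    have h2 : derivWithin g s x = x/2 * g x - lam * |g x| ^ q - (q-2)/(2*(q-1)) * f x := by
      have := hode x (le_of_lt hx)
      linarith
    rwa [h2] at h1
  exact KPZaux.core hq hlam hfc hgc hf' hg' hf0 hf'0
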